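/- arXiv:2209.07450 — 6 statements merged into one kernel-verified Lean document; each statement's English description precedes it below -/
import Mathlib

section
/- For all constants k, k₁, k₂ > 0 and all real numbers u₁, u₂, v₁, v₂ ≥ 0, the Langmuir reaction rate satisfies the Lipschitz estimate |R(u₁,v₁) − R(u₂,v₂)| ≤ (k·k₁/4)·|u₁ − u₂| + (k·k₂/4)·|v₁ − v₂|; in particular R is Lipschitz continuous on the quadrant [0,∞)². -/
/-- The Langmuir reaction rate `R : ℝ² → ℝ`, defined by
`R(u,v) = k·k₁u·k₂v/(1 + k₁u + k₂v)²` if `u ≥ 0` and `v ≥ 0`, and `0` otherwise. -/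
noncomputable def langmuirRate (k k₁ k₂ : ℝ) (u v : ℝ) : ℝ :=
  if 0 ≤ u ∧ 0 ≤ v then k * (k₁ * u) * (k₂ * v) / (1 + k₁ * u + k₂ * v) ^ 2 else 0

lemma key_aux (a a' b : ℝ) (ha : 0 ≤ a) (ha' : 0 ≤ a') (hb : 0 ≤ b) :
    |a * b / (1 + a + b) ^ 2 - a' * b / (1 + a' + b) ^ 2| ≤ |a - a'| / 4 := by
  have d1 : (0:ℝ) < (1 + a + b) ^ 2 := by positivity
  have d2 : (0:ℝ) < (1 + a' + b) ^ 2 := by positivity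
  have heq : a * b / (1 + a + b) ^ 2 - a' * b / (1 + a' + b) ^ 2 =
      ((a - a') * (b * ((1 + b) ^ 2 - a * a'))) / ((1 + a + b) ^ 2 * (1 + a' + b) ^ 2) := by
    field_simp
    ring
  rw [heq, abs_div, abs_mul]
  rw [div_le_iff₀ (by positivity)]
  have h1 : |b * ((1 + b) ^ 2 - a * a')| ≤ (1 + a + b) ^ 2 * (1 + a' + b) ^ 2 / 4 := by
    rw [abs_le]
    constructor
    · nlinarith [sq_nonneg (1 - b), sq_nonneg (a - a'), mul_nonneg ha ha', sq_nonneg (1 + b), mul_nonneg (mul_nonneg ha ha') hb, sq_nonneg (a + a'), mul_nonneg ha hb, mul_nonneg ha' hb]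
    · nlinarith [sq_nonneg (1 - b), sq_nonneg (a - a'), mul_nonneg ha ha', sq_nonneg (1 + b), mul_nonneg (mul_nonneg ha ha') hb, sq_nonneg (a + a'), mul_nonneg ha hb, mul_nonneg ha' hb]
  have hnn := abs_nonneg (a - a')
  rw [abs_of_pos (by positivity : (0:ℝ) < (1 + a + b) ^ 2 * (1 + a' + b) ^ 2)]
  calc |a - a'| * |b * ((1 + b) ^ 2 - a * a')|
      ≤ |a - a'| * ((1 + a + b) ^ 2 * (1 + a' + b) ^ 2 / 4) :=
        mul_le_mul_of_nonneg_left h1 hnn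
    _ = |a - a'| / 4 * ((1 + a + b) ^ 2 * (1 + a' + b) ^ 2) := by ring

lemma key_aux' (a b b' : ℝ) (ha : 0 ≤ a) (hb : 0 ≤ b) (hb' : 0 ≤ b') :
    |a * b / (1 + a + b) ^ 2 - a * b' / (1 + a + b') ^ 2| ≤ |b - b'| / 4 := by
  have := key_aux b b' a hb hb' ha
  have e1 : a * b / (1 + a + b) ^ 2 = b * a / (1 + b + a) ^ 2 := by ring_nf
  have e2 : a * b' / (1 + a + b') ^ 2 = b' * a / (1 + b' + a) ^ 2 := by ring_nf
  rw [e1, e2]; exact this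

lemma langmuir_main (k k₁ k₂ : ℝ) (hk : 0 < k) (hk₁ : 0 < k₁) (hk₂ : 0 < k₂)
    (u₁ u₂ v₁ v₂ : ℝ) (hu₁ : 0 ≤ u₁) (hu₂ : 0 ≤ u₂) (hv₁ : 0 ≤ v₁) (hv₂ : 0 ≤ v₂) :
    |langmuirRate k k₁ k₂ u₁ v₁ - langmuirRate k k₁ k₂ u₂ v₂| ≤
      (k * k₁ / 4) * |u₁ - u₂| + (k * k₂ / 4) * |v₁ - v₂| := by
  set a₁ := k₁ * u₁; set a₂ := k₁ * u₂; set b₁ := k₂ * v₁; set b₂ := k₂ * v₂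
  have ha₁ : 0 ≤ a₁ := by positivity
  have ha₂ : 0 ≤ a₂ := by positivity
  have hb₁ : 0 ≤ b₁ := by positivity
  have hb₂ : 0 ≤ b₂ := by positivity
  have r1 : langmuirRate k k₁ k₂ u₁ v₁ = k * (a₁ * b₁ / (1 + a₁ + b₁) ^ 2) := by
    rw [langmuirRate, if_pos ⟨hu₁, hv₁⟩]; ring
  have r2 : langmuirRate k k₁ k₂ u₂ v₂ = k * (a₂ * b₂ / (1 + a₂ + b₂) ^ 2) := by
    rw [langmuirRate, if_pos ⟨hu₂, hv₂⟩]; ring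
  rw [r1, r2]
  have h1 := key_aux a₁ a₂ b₁ ha₁ ha₂ hb₁
  have h2 := key_aux' a₂ b₁ b₂ ha₂ hb₁ hb₂
  have tri : |k * (a₁ * b₁ / (1 + a₁ + b₁) ^ 2) - k * (a₂ * b₂ / (1 + a₂ + b₂) ^ 2)| ≤
      k * |a₁ * b₁ / (1 + a₁ + b₁) ^ 2 - a₂ * b₁ / (1 + a₂ + b₁) ^ 2| +
      k * |a₂ * b₁ / (1 + a₂ + b₁) ^ 2 - a₂ * b₂ / (1 + a₂ + b₂) ^ 2| := by
    calc |k * (a₁ * b₁ / (1 + a₁ + b₁) ^ 2) - k * (a₂ * b₂ / (1 + a₂ + b₂) ^ 2)|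
        = k * |a₁ * b₁ / (1 + a₁ + b₁) ^ 2 - a₂ * b₂ / (1 + a₂ + b₂) ^ 2| := by
          rw [← mul_sub, abs_mul, abs_of_pos hk]
      _ ≤ _ := by
          rw [← mul_add]
          apply mul_le_mul_of_nonneg_left _ hk.le
          exact abs_sub_le _ _ _
  have habs1 : |a₁ - a₂| = k₁ * |u₁ - u₂| := by
    rw [show a₁ - a₂ = k₁ * (u₁ - u₂) by ring, abs_mul, abs_of_pos hk₁]
  have habs2 : |b₁ - b₂| = k₂ * |v₁ - v₂| := by
    rw [show b₁ - b₂ = k₂ * (v₁ - v₂) by ring, abs_mul, abs_of_pos hk₂]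
  have := mul_le_mul_of_nonneg_left h1 hk.le
  have := mul_le_mul_of_nonneg_left h2 hk.le
  nlinarith [tri]

/-- For all constants `k, k₁, k₂ > 0` and all `u₁, u₂, v₁, v₂ ≥ 0`, the Langmuir
reaction rate satisfies the Lipschitz estimate
`|R(u₁,v₁) − R(u₂,v₂)| ≤ (k·k₁/4)·|u₁ − u₂| + (k·k₂/4)·|v₁ − v₂|`;
in particular `R` is Lipschitz continuous on the quadrant `[0,∞)²`. -/
theorem langmuir_rate_lipschitz (k k₁ k₂ : ℝ) (hk : 0 < k) (hk₁ : 0 < k₁) (hk₂ : 0 < k₂)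
    (u₁ u₂ v₁ v₂ : ℝ) (hu₁ : 0 ≤ u₁) (hu₂ : 0 ≤ u₂) (hv₁ : 0 ≤ v₁) (hv₂ : 0 ≤ v₂) :
    |langmuirRate k k₁ k₂ u₁ v₁ - langmuirRate k k₁ k₂ u₂ v₂| ≤
      (k * k₁ / 4) * |u₁ - u₂| + (k * k₂ / 4) * |v₁ - v₂| ∧
    ∃ L : NNReal, LipschitzOnWith L (fun p : ℝ × ℝ => langmuirRate k k₁ k₂ p.1 p.2)
      (Set.Ici 0 ×ˢ Set.Ici 0) := by
  refine ⟨langmuir_main k k₁ k₂ hk hk₁ hk₂ u₁ u₂ v₁ v₂ hu₁ hu₂ hv₁ hv₂, ?_⟩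
  refine ⟨(k * k₁ / 4 + k * k₂ / 4).toNNReal, LipschitzOnWith.of_dist_le_mul ?_⟩
  rintro ⟨x1, x2⟩ ⟨hx1, hx2⟩ ⟨y1, y2⟩ ⟨hy1, hy2⟩
  simp only [Set.mem_Ici] at hx1 hx2 hy1 hy2
  rw [Real.coe_toNNReal _ (by positivity), Prod.dist_eq, Real.dist_eq, Real.dist_eq, Real.dist_eq]
  calc |langmuirRate k k₁ k₂ x1 x2 - langmuirRate k k₁ k₂ y1 y2|
      ≤ (k * k₁ / 4) * |x1 - y1| + (k * k₂ / 4) * |x2 - y2| :=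
        langmuir_main k k₁ k₂ hk hk₁ hk₂ x1 y1 x2 y2 hx1 hy1 hx2 hy2
    _ ≤ (k * k₁ / 4) * max |x1 - y1| |x2 - y2| + (k * k₂ / 4) * max |x1 - y1| |x2 - y2| := by
        gcongr
        · exact le_max_left _ _
        · exact le_max_right _ _
    _ = (k * k₁ / 4 + k * k₂ / 4) * max |x1 - y1| |x2 - y2| := by ring
end

section
/- Let T > 0, δ > 0, k_d > 0, and let r : [0,T] → ℝ be continuous with r(t) ≥ 0 for all t. If w : [0,T] → ℝ is differentiable with w(0) = w₀ ≥ 0 and w'(t) = k_d·(r(t) − ψ_δ(w(t))) for all t ∈ [0,T], then w(t) ≥ 0 for all t ∈ [0,T]. -/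
/-- For `δ > 0`, the regularized dissolution rate `ψ_δ : ℝ → ℝ`:
`ψ_δ(w) = 0` for `w ≤ 0`, `ψ_δ(w) = w/δ` for `0 < w < δ`, and `ψ_δ(w) = 1` for `w ≥ δ`. -/
noncomputable def psiDelta (δ : ℝ) (w : ℝ) : ℝ :=
  if w ≤ 0 then 0 else if w < δ then w / δ else 1

/-- Let `T > 0`, `δ > 0`, `k_d > 0`, and let `r : [0,T] → ℝ` be continuous with `r ≥ 0`.
If `w` is differentiable on `[0,T]` with `w(0) = w₀ ≥ 0` and
`w'(t) = k_d·(r(t) − ψ_δ(w(t)))`, then `w(t) ≥ 0` for all `t ∈ [0,T]`. -/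
theorem regularized_ode_nonneg (T δ kd w₀ : ℝ) (hT : 0 < T) (hδ : 0 < δ) (hkd : 0 < kd)
    (r w : ℝ → ℝ) (hr : ContinuousOn r (Set.Icc 0 T))
    (hrpos : ∀ t ∈ Set.Icc (0 : ℝ) T, 0 ≤ r t)
    (hw0 : w 0 = w₀) (hw₀pos : 0 ≤ w₀)
    (hw : ∀ t ∈ Set.Icc (0 : ℝ) T,
      HasDerivWithinAt w (kd * (r t - psiDelta δ (w t))) (Set.Icc 0 T) t) :
    ∀ t ∈ Set.Icc (0 : ℝ) T, 0 ≤ w t := by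
  have hwc : ContinuousOn w (Set.Icc 0 T) :=
    fun t ht => (hw t ht).continuousWithinAt
  by_contra hcon
  push_neg at hcon
  obtain ⟨t₀, ht₀, hwt₀⟩ := hcon
  set S : Set ℝ := {t | t ∈ Set.Icc (0 : ℝ) t₀ ∧ 0 ≤ w t} with hS
  have hsub : Set.Icc (0 : ℝ) t₀ ⊆ Set.Icc 0 T :=
    Set.Icc_subset_Icc le_rfl ht₀.2
  have hSclosed : IsClosed S := by
    have : S = Set.Icc 0 t₀ ∩ {t ∈ Set.Icc 0 t₀ | w t ∈ Set.Ici 0} := by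
      ext x; simp [hS, Set.mem_sep_iff]
    rw [this]
    exact isClosed_Icc.inter <|
      (hwc.mono hsub).preimage_isClosed_of_isClosed isClosed_Icc isClosed_Ici
  have hSne : S.Nonempty := ⟨0, ⟨le_rfl, ht₀.1⟩, by rw [hw0]; exact hw₀pos⟩
  have hSbdd : BddAbove S := ⟨t₀, fun x hx => hx.1.2⟩
  set s := sSup S with hs
  have hsS : s ∈ S := hSclosed.csSup_mem hSne hSbdd
  have hws : 0 ≤ w s := hsS.2
  have hst₀ : s < t₀ := lt_of_le_of_ne hsS.1.2 (fun h => by rw [h] at hws; linarith)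
  have hneg : ∀ x ∈ Set.Ioo s t₀, w x < 0 := by
    intro x hx
    by_contra h
    push_neg at h
    have : x ∈ S := ⟨⟨le_trans hsS.1.1 hx.1.le, hx.2.le⟩, h⟩
    exact absurd (le_csSup hSbdd this) (not_le.mpr hx.1)
  have hsub2 : Set.Icc s t₀ ⊆ Set.Icc 0 T :=
    Set.Icc_subset_Icc hsS.1.1 ht₀.2
  have hmono : MonotoneOn w (Set.Icc s t₀) := by
    apply monotoneOn_of_hasDerivWithinAt_nonneg (convex_Icc s t₀) (hwc.mono hsub2)
      (f' := fun t => kd * (r t - psiDelta δ (w t)))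
    · intro x hx
      rw [interior_Icc] at hx ⊢
      exact (hw x (hsub2 (Set.Ioo_subset_Icc_self hx))).mono
        (Set.Subset.trans Set.Ioo_subset_Icc_self hsub2)
    · intro x hx
      rw [interior_Icc] at hx
      have hx' := hsub2 (Set.Ioo_subset_Icc_self hx)
      have : psiDelta δ (w x) = 0 := by
        simp [psiDelta, (hneg x hx).le]
      rw [this, sub_zero]
      exact mul_nonneg hkd.le (hrpos x hx')
  have := hmono (Set.left_mem_Icc.mpr hst₀.le) (Set.right_mem_Icc.mpr hst₀.le) hst₀.le
  linarith
end

section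
/- Solutions of the multivalued precipitation–dissolution ODE are unique: let T > 0, k_d > 0, and r : [0,T] → ℝ. Suppose that for i = 1, 2 the function w_i : [0,T] → ℝ is differentiable, z_i : [0,T] → ℝ satisfies z_i(t) ∈ ψ(w_i(t)) for all t ∈ [0,T], and w_i'(t) = k_d·(r(t) − z_i(t)) for all t ∈ [0,T]. If w₁(0) = w₂(0), then w₁(t) = w₂(t) for all t ∈ [0,T]. -/
/-- The multivalued Heaviside dissolution graph: `z ∈ ψ(w)` iff `0 ≤ z ≤ 1`,
`z = 0` whenever `w < 0`, and `z = 1` whenever `w > 0`. -/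
def psiGraph (w : ℝ) : Set ℝ :=
  {z : ℝ | 0 ≤ z ∧ z ≤ 1 ∧ (w < 0 → z = 0) ∧ (0 < w → z = 1)}

lemma psiGraph_mono {a b x y : ℝ} (hx : x ∈ psiGraph a) (hy : y ∈ psiGraph b) :
    0 ≤ (a - b) * (x - y) := by
  obtain ⟨hx0, hx1, hxn, hxp⟩ := hx
  obtain ⟨hy0, hy1, hyn, hyp⟩ := hy
  rcases lt_trichotomy a b with h | h | h
  · rcases lt_trichotomy a 0 with ha | ha | ha
    · rw [hxn ha]; nlinarith
    · have := hyp (by linarith); nlinarith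
    · have := hxp ha; have := hyp (by linarith); nlinarith
  · simp [h]
  · rcases lt_trichotomy b 0 with hb | hb | hb
    · rw [hyn hb]; nlinarith
    · have := hxp (by linarith); nlinarith
    · have := hyp hb; have := hxp (by linarith); nlinarith

/-- Uniqueness for the multivalued precipitation–dissolution ODE: if for `i = 1,2`,
`w_i` is differentiable on `[0,T]`, `z_i(t) ∈ ψ(w_i(t))` and
`w_i'(t) = k_d·(r(t) − z_i(t))` on `[0,T]`, and `w₁(0) = w₂(0)`, then `w₁ = w₂` on `[0,T]`. -/
theorem multivalued_ode_uniqueness (T kd : ℝ) (hT : 0 < T) (hkd : 0 < kd)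
    (r w₁ w₂ z₁ z₂ : ℝ → ℝ)
    (hz₁ : ∀ t ∈ Set.Icc (0 : ℝ) T, z₁ t ∈ psiGraph (w₁ t))
    (hz₂ : ∀ t ∈ Set.Icc (0 : ℝ) T, z₂ t ∈ psiGraph (w₂ t))
    (hw₁ : ∀ t ∈ Set.Icc (0 : ℝ) T,
      HasDerivWithinAt w₁ (kd * (r t - z₁ t)) (Set.Icc 0 T) t)
    (hw₂ : ∀ t ∈ Set.Icc (0 : ℝ) T,
      HasDerivWithinAt w₂ (kd * (r t - z₂ t)) (Set.Icc 0 T) t)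
    (h0 : w₁ 0 = w₂ 0) :
    ∀ t ∈ Set.Icc (0 : ℝ) T, w₁ t = w₂ t := by
  set g : ℝ → ℝ := fun t => (w₁ t - w₂ t) ^ 2 with hg
  have hcont : ContinuousOn g (Set.Icc 0 T) := by
    apply ContinuousOn.pow
    exact ContinuousOn.sub (fun t ht => (hw₁ t ht).continuousWithinAt)
      (fun t ht => (hw₂ t ht).continuousWithinAt)
  have hderiv : ∀ t ∈ interior (Set.Icc (0 : ℝ) T),
      HasDerivAt g (2 * (w₁ t - w₂ t) * (kd * (r t - z₁ t) - kd * (r t - z₂ t))) t := by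
    intro t ht
    rw [interior_Icc] at ht
    have hmem : t ∈ Set.Icc (0 : ℝ) T := Set.Ioo_subset_Icc_self ht
    have hnhds : Set.Icc (0 : ℝ) T ∈ nhds t :=
      mem_nhds_iff.mpr ⟨Set.Ioo 0 T, Set.Ioo_subset_Icc_self, isOpen_Ioo, ht⟩
    have h1 : HasDerivAt w₁ (kd * (r t - z₁ t)) t := (hw₁ t hmem).hasDerivAt hnhds
    have h2 : HasDerivAt w₂ (kd * (r t - z₂ t)) t := (hw₂ t hmem).hasDerivAt hnhds
    have := ((h1.sub h2).fun_pow 2)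
    simpa [hg, mul_comm, mul_assoc, mul_left_comm] using this
  have hanti : AntitoneOn g (Set.Icc 0 T) := by
    apply antitoneOn_of_deriv_nonpos (convex_Icc 0 T) hcont
    · intro t ht
      exact (hderiv t ht).differentiableAt.differentiableWithinAt
    · intro t ht
      rw [(hderiv t ht).deriv]
      have hmem : t ∈ Set.Icc (0 : ℝ) T := by
        rw [interior_Icc] at ht; exact Set.Ioo_subset_Icc_self ht
      have hmono := psiGraph_mono (hz₁ t hmem) (hz₂ t hmem)
      nlinarith [hkd]
  intro t ht
  have hle : g t ≤ g 0 := hanti (Set.left_mem_Icc.mpr hT.le) ht ht.1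
  have hg0 : g 0 = 0 := by simp [hg, h0]
  have : g t ≤ 0 := hg0 ▸ hle
  have hge : 0 ≤ g t := sq_nonneg _
  have : g t = 0 := le_antisymm this hge
  have h2 : (w₁ t - w₂ t) ^ 2 = 0 := this
  have h : w₁ t - w₂ t = 0 := by
    exact pow_eq_zero_iff two_ne_zero |>.mp h2
  linarith
end

section
/- Stability of the regularized precipitation–dissolution ODE: let T > 0, δ > 0, k_d > 0, let r₁, r₂ : [0,T] → ℝ be continuous, and for i = 1, 2 let w_i : [0,T] → ℝ be differentiable with w_i'(t) = k_d·(r_i(t) − ψ_δ(w_i(t))) for all t ∈ [0,T]. Then for every t ∈ [0,T], |w₁(t) − w₂(t)| ≤ (|w₁(0) − w₂(0)| + k_d·∫₀ᵗ |r₁(s) − r₂(s)| ds)·exp(k_d·t/δ). -/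
lemma psiDelta_eq (δ : ℝ) (hδ : 0 < δ) (w : ℝ) :
    psiDelta δ w = max 0 (min (w / δ) 1) := by
  unfold psiDelta
  split_ifs with h1 h2
  · rw [max_eq_left]
    exact min_le_of_left_le (div_nonpos_of_nonpos_of_nonneg h1 hδ.le)
  · rw [min_eq_left ((div_le_one hδ).2 h2.le),
      max_eq_right (le_of_lt (div_pos (lt_of_not_ge h1) hδ))]
  · rw [min_eq_right ((one_le_div hδ).2 (le_of_not_gt h2)), max_eq_right zero_le_one]

lemma psiDelta_lipschitz (δ : ℝ) (hδ : 0 < δ) (a b : ℝ) :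
    |psiDelta δ a - psiDelta δ b| ≤ |a - b| / δ := by
  rw [psiDelta_eq δ hδ a, psiDelta_eq δ hδ b]
  calc |max 0 (min (a / δ) 1) - max 0 (min (b / δ) 1)|
      ≤ |min (a / δ) 1 - min (b / δ) 1| := by
        have := abs_max_sub_max_le_abs (min (a / δ) 1) (min (b / δ) 1) 0
        simpa [max_comm] using this
    _ ≤ max |a / δ - b / δ| |(1:ℝ) - 1| := abs_min_sub_min_le_max _ _ _ _
    _ = |a - b| / δ := by
        rw [sub_self, abs_zero, max_eq_left (abs_nonneg _), ← sub_div, abs_div,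
          abs_of_pos hδ]

/-- Stability of the regularized precipitation–dissolution ODE: if `r₁, r₂` are continuous
on `[0,T]` and `w_i'(t) = k_d·(r_i(t) − ψ_δ(w_i(t)))` on `[0,T]` for `i = 1,2`, then
`|w₁(t) − w₂(t)| ≤ (|w₁(0) − w₂(0)| + k_d·∫₀ᵗ |r₁ − r₂|)·exp(k_d·t/δ)` on `[0,T]`. -/
theorem regularized_ode_stability (T δ kd : ℝ) (hT : 0 < T) (hδ : 0 < δ) (hkd : 0 < kd)
    (r₁ r₂ w₁ w₂ : ℝ → ℝ)
    (hr₁ : ContinuousOn r₁ (Set.Icc 0 T)) (hr₂ : ContinuousOn r₂ (Set.Icc 0 T))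
    (hw₁ : ∀ t ∈ Set.Icc (0 : ℝ) T,
      HasDerivWithinAt w₁ (kd * (r₁ t - psiDelta δ (w₁ t))) (Set.Icc 0 T) t)
    (hw₂ : ∀ t ∈ Set.Icc (0 : ℝ) T,
      HasDerivWithinAt w₂ (kd * (r₂ t - psiDelta δ (w₂ t))) (Set.Icc 0 T) t) :
    ∀ t ∈ Set.Icc (0 : ℝ) T,
      |w₁ t - w₂ t| ≤
        (|w₁ 0 - w₂ 0| + kd * ∫ s in (0 : ℝ)..t, |r₁ s - r₂ s|) * Real.exp (kd * t / δ) := by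
  -- projection onto [0,T]
  set π : ℝ → ℝ := fun s => max 0 (min s T) with hπdef
  have hπcont : Continuous π := continuous_const.max (continuous_id.min continuous_const)
  have hπmem : ∀ s, π s ∈ Set.Icc (0 : ℝ) T := fun s =>
    ⟨le_max_left _ _, max_le hT.le (min_le_right _ _)⟩
  have hπeq : ∀ s ∈ Set.Icc (0 : ℝ) T, π s = s := by
    intro s hs
    simp [hπdef, min_eq_left hs.2, max_eq_right hs.1]
  -- globally continuous extension of kd * |r₁ - r₂|
  set g : ℝ → ℝ := fun s => kd * |r₁ (π s) - r₂ (π s)| with hgdef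
  have hgcont : Continuous g := by
    have h1 : Continuous fun s => r₁ (π s) := hr₁.comp_continuous hπcont hπmem
    have h2 : Continuous fun s => r₂ (π s) := hr₂.comp_continuous hπcont hπmem
    exact continuous_const.mul ((h1.sub h2).abs)
  have hgnonneg : ∀ s, 0 ≤ g s := fun s => mul_nonneg hkd.le (abs_nonneg _)
  set K : ℝ := kd / δ with hKdef
  have hK : 0 < K := div_pos hkd hδ
  set A : ℝ := |w₁ 0 - w₂ 0| with hAdef
  -- the difference function
  set f : ℝ → ℝ := fun t => w₁ t - w₂ t with hfdef
  set f' : ℝ → ℝ := fun t =>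
    kd * (r₁ t - psiDelta δ (w₁ t)) - kd * (r₂ t - psiDelta δ (w₂ t)) with hf'def
  have hfderiv : ∀ t ∈ Set.Icc (0:ℝ) T, HasDerivWithinAt f (f' t) (Set.Icc 0 T) t :=
    fun t ht => (hw₁ t ht).sub (hw₂ t ht)
  have hfcont : ContinuousOn f (Set.Icc 0 T) := fun t ht =>
    (hfderiv t ht).continuousWithinAt
  have hfr : ∀ t ∈ Set.Ico (0:ℝ) T, HasDerivWithinAt f (f' t) (Set.Ici t) t := fun t ht =>
    (hfderiv t (Set.mem_Icc_of_Ico ht)).mono_of_mem_nhdsWithin (Icc_mem_nhdsGE_of_mem ht)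
  have hf'bound : ∀ t ∈ Set.Icc (0:ℝ) T, |f' t| ≤ g t + K * |f t| := by
    intro t ht
    have hlip := psiDelta_lipschitz δ hδ (w₁ t) (w₂ t)
    have hft : f' t = kd * (r₁ t - r₂ t) - kd * (psiDelta δ (w₁ t) - psiDelta δ (w₂ t)) := by
      simp only [hf'def]; ring
    have hgt : g t = kd * |r₁ t - r₂ t| := by rw [hgdef]; simp [hπeq t ht]
    rw [hft, hgt]
    calc |kd * (r₁ t - r₂ t) - kd * (psiDelta δ (w₁ t) - psiDelta δ (w₂ t))|
        ≤ |kd * (r₁ t - r₂ t)| + |kd * (psiDelta δ (w₁ t) - psiDelta δ (w₂ t))| :=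
          abs_sub _ _
      _ ≤ kd * |r₁ t - r₂ t| + K * |f t| := by
          rw [abs_mul, abs_mul, abs_of_pos hkd]
          have h4 : kd * |psiDelta δ (w₁ t) - psiDelta δ (w₂ t)|
              ≤ kd * (|w₁ t - w₂ t| / δ) := by gcongr
          have h5 : kd * (|w₁ t - w₂ t| / δ) = K * |f t| := by
            simp only [hKdef, hfdef]; ring
          linarith
  -- the ε-perturbed boundary function
  have key : ∀ ε > (0:ℝ), ∀ t ∈ Set.Icc (0:ℝ) T,
      |f t| ≤ (A + ε + ∫ s in (0:ℝ)..t, (g s + ε)) * Real.exp (K * t) := by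
    intro ε hε
    set B : ℝ → ℝ := fun t => (A + ε + ∫ s in (0:ℝ)..t, (g s + ε)) * Real.exp (K * t)
      with hBdef
    set B' : ℝ → ℝ := fun t => (g t + ε) * Real.exp (K * t) + K * B t with hB'def
    have hI : ∀ t : ℝ, HasDerivAt (fun u => ∫ s in (0:ℝ)..u, (g s + ε)) (g t + ε) t :=
      fun t => ((hgcont.add continuous_const).integral_hasStrictDerivAt 0 t).hasDerivAt
    have hBderiv : ∀ t : ℝ, HasDerivAt B (B' t) t := by
      intro t
      have hE : HasDerivAt (fun u => Real.exp (K * u)) (Real.exp (K * t) * K) t := by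
        simpa using ((hasDerivAt_id t).const_mul K).exp
      have := (((hI t).const_add (A + ε))).mul hE
      refine this.congr_deriv ?_
      simp only [hB'def, hBdef]
      ring
    have ha : ‖f 0‖ ≤ B 0 := by
      simp only [hBdef, Real.norm_eq_abs, intervalIntegral.integral_same, mul_zero,
        Real.exp_zero, add_zero, mul_one, hAdef]
      linarith
    have bound : ∀ t ∈ Set.Ico (0:ℝ) T, ‖f t‖ = B t → ‖f' t‖ < B' t := by
      intro t ht heq
      rw [Real.norm_eq_abs] at heq ⊢
      have htm := Set.mem_Icc_of_Ico ht
      have h1 := hf'bound t htm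
      have hexp : (1:ℝ) ≤ Real.exp (K * t) :=
        Real.one_le_exp (mul_nonneg hK.le ht.1)
      have h2 : g t + K * |f t| < (g t + ε) * Real.exp (K * t) + K * B t := by
        rw [heq]
        have : g t ≤ g t * Real.exp (K * t) := le_mul_of_one_le_right (hgnonneg t) hexp
        nlinarith [hgnonneg t, Real.exp_pos (K * t)]
      exact lt_of_le_of_lt h1 h2
    exact fun t ht =>
      (image_norm_le_of_norm_deriv_right_lt_deriv_boundary hfcont hfr ha hBderiv bound) ht
  -- pass to the limit ε → 0 and rewrite
  intro t ht
  have hInt : ∀ ε : ℝ, (∫ s in (0:ℝ)..t, (g s + ε)) = (∫ s in (0:ℝ)..t, g s) + ε * t := by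
    intro ε
    rw [intervalIntegral.integral_add (hgcont.intervalIntegrable 0 t)
      (intervalIntegrable_const)]
    simp [mul_comm]
  have hIg : (∫ s in (0:ℝ)..t, g s) = kd * ∫ s in (0:ℝ)..t, |r₁ s - r₂ s| := by
    rw [← intervalIntegral.integral_const_mul]
    apply intervalIntegral.integral_congr
    intro s hs
    rw [Set.uIcc_of_le ht.1] at hs
    have hsm : s ∈ Set.Icc (0:ℝ) T := ⟨hs.1, hs.2.trans ht.2⟩
    simp [hgdef, hπeq s hsm]
  have hKt : K * t = kd * t / δ := by rw [hKdef]; ring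
  have hlim : ∀ ε > (0:ℝ), |f t| ≤
      (A + kd * ∫ s in (0:ℝ)..t, |r₁ s - r₂ s|) * Real.exp (kd * t / δ)
        + ε * ((1 + t) * Real.exp (kd * t / δ)) := by
    intro ε hε
    have := key ε hε t ht
    rw [hInt, hIg, hKt] at this
    calc |f t| ≤ (A + kd * (∫ s in (0:ℝ)..t, |r₁ s - r₂ s|) + ε + ε * t) *
          Real.exp (kd * t / δ) := by
          convert this using 2; ring
      _ = (A + kd * ∫ s in (0:ℝ)..t, |r₁ s - r₂ s|) * Real.exp (kd * t / δ)
            + ε * ((1 + t) * Real.exp (kd * t / δ)) := by ring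
  by_contra hcon
  push_neg at hcon
  set L := (|w₁ 0 - w₂ 0| + kd * ∫ s in (0:ℝ)..t, |r₁ s - r₂ s|) * Real.exp (kd * t / δ)
    with hLdef
  set c := (1 + t) * Real.exp (kd * t / δ) with hcdef
  have hc : 0 < c := mul_pos (by linarith [ht.1]) (Real.exp_pos _)
  simp only [hfdef, hAdef] at hlim
  have hε0 : 0 < (|w₁ t - w₂ t| - L) / (2 * c) := div_pos (by linarith) (by linarith)
  have h5 := hlim _ hε0
  have h6 : (|w₁ t - w₂ t| - L) / (2 * c) * c = (|w₁ t - w₂ t| - L) / 2 := by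
    field_simp
  rw [h6] at h5
  linarith
end

section
/- Existence of a nonnegative solution of the multivalued precipitation–dissolution ODE: let T > 0, k > 0, k_d > 0, let w₀ ≥ 0, and let r : [0,T] → ℝ be continuous with 0 ≤ r(t) ≤ k/4 for all t. Then there exist a Lipschitz function w : [0,T] → ℝ with Lipschitz constant k_d·(1 + k/4) and a measurable function z : [0,T] → ℝ such that w(0) = w₀, w(t) ≥ 0 for all t ∈ [0,T], and for almost every t ∈ (0,T): z(t) ∈ ψ(w(t)) and w is differentiable at t with w'(t) = k_d·(r(t) − z(t)). -/
open MeasureTheory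

open Set Filter Topology

lemma deriv_nonpos_of_left_min' {F : ℝ → ℝ} {t d : ℝ} (ht : 0 < t)
    (hd : HasDerivAt F d t) (hmin : ∀ u ∈ Set.Icc 0 t, F t ≤ F u) : d ≤ 0 := by
  have h := hasDerivAt_iff_tendsto_slope.1 hd
  have h2 : Tendsto (slope F t) (𝓝[<] t) (𝓝 d) :=
    h.mono_left (nhdsWithin_mono t fun x hx => ne_of_lt hx)
  refine le_of_tendsto h2 ?_
  filter_upwards [Ioo_mem_nhdsLT_of_mem (Set.mem_Ioc.2 ⟨ht, le_refl t⟩)] with s hs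
  have h1 : F t ≤ F s := hmin s ⟨hs.1.le, hs.2.le⟩
  rw [slope_def_field]
  exact div_nonpos_of_nonneg_of_nonpos (sub_nonneg.2 h1) (sub_neg.2 hs.2).le

/-- Existence of a nonnegative solution of the multivalued precipitation–dissolution ODE:
for `T, k, k_d > 0`, `w₀ ≥ 0` and continuous `r : [0,T] → ℝ` with `0 ≤ r ≤ k/4`, there exist
a Lipschitz function `w` (constant `k_d·(1 + k/4)`) and a measurable `z` with `w(0) = w₀`,
`w ≥ 0` on `[0,T]`, and for a.e. `t ∈ (0,T)`: `z(t) ∈ ψ(w(t))` and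
`w'(t) = k_d·(r(t) − z(t))`. -/
theorem multivalued_ode_existence (T k kd w₀ : ℝ) (hT : 0 < T) (hk : 0 < k) (hkd : 0 < kd)
    (hw₀ : 0 ≤ w₀) (r : ℝ → ℝ) (hr : ContinuousOn r (Set.Icc 0 T))
    (hrb : ∀ t ∈ Set.Icc (0 : ℝ) T, 0 ≤ r t ∧ r t ≤ k / 4) :
    ∃ w z : ℝ → ℝ,
      LipschitzOnWith (Real.toNNReal (kd * (1 + k / 4))) w (Set.Icc 0 T) ∧
      Measurable z ∧
      w 0 = w₀ ∧
      (∀ t ∈ Set.Icc (0 : ℝ) T, 0 ≤ w t) ∧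
      (∀ᵐ t ∂(volume.restrict (Set.Ioo (0 : ℝ) T)),
        z t ∈ psiGraph (w t) ∧ HasDerivAt w (kd * (r t - z t)) t) := by
  have hL : 0 < kd * (1 + k / 4) := by positivity
  set L : ℝ := kd * (1 + k / 4) with hLdef
  set K : NNReal := Real.toNNReal L with hKdef
  have hKL : (K : ℝ) = L := Real.coe_toNNReal L hL.le
  -- the clamp to [0,T]
  set c : ℝ → ℝ := fun t => max 0 (min T t) with hc
  have hc_mem : ∀ t, c t ∈ Set.Icc 0 T := fun t =>
    ⟨le_max_left _ _, max_le hT.le (min_le_left _ _)⟩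
  have hc_eq : ∀ t ∈ Set.Icc 0 T, c t = t := fun t ht => by
    simp only [hc, min_eq_right ht.2, max_eq_right ht.1]
  have hc_cont : Continuous c := continuous_const.max (continuous_const.min continuous_id)
  set rc : ℝ → ℝ := fun t => r (c t) with hrc
  have hrc_cont : Continuous rc := hr.comp_continuous hc_cont hc_mem
  have hrc_mem : ∀ t, 0 ≤ rc t ∧ rc t ≤ k / 4 := fun t => hrb _ (hc_mem t)
  set g : ℝ → ℝ := fun t => kd * (rc t - 1) with hg
  have hg_cont : Continuous g := continuous_const.mul (hrc_cont.sub continuous_const)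
  have hg_bound : ∀ t, |g t| ≤ L := by
    intro t
    have h1 := (hrc_mem t).1; have h2 := (hrc_mem t).2
    rw [hg]
    rw [abs_mul, abs_of_pos hkd, hLdef]
    apply mul_le_mul_of_nonneg_left _ hkd.le
    rw [abs_le]; constructor <;> nlinarith [hk.le]
  set F : ℝ → ℝ := fun t => w₀ + ∫ s in (0:ℝ)..t, g s with hF
  have hF_deriv : ∀ t, HasDerivAt F (g t) t := fun t =>
    ((hg_cont.integral_hasStrictDerivAt 0 t).hasDerivAt).const_add w₀
  have hF_lip : ∀ a b : ℝ, |F b - F a| ≤ L * |b - a| := by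
    intro a b
    have hsub : F b - F a = ∫ s in a..b, g s := by
      rw [hF]
      simp only [add_sub_add_left_eq_sub]
      exact intervalIntegral.integral_interval_sub_left
        (hg_cont.intervalIntegrable 0 b) (hg_cont.intervalIntegrable 0 a)
    rw [hsub]
    have := intervalIntegral.norm_integral_le_of_norm_le_const
      (C := L) (f := g) (a := a) (b := b) (fun x _ => by rw [Real.norm_eq_abs]; exact hg_bound x)
    rwa [Real.norm_eq_abs] at this
  have hF_lipW : LipschitzWith K F := by
    apply LipschitzWith.of_dist_le_mul
    intro a b
    rw [Real.dist_eq, Real.dist_eq, hKL]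
    exact hF_lip b a
  have hF_cont : Continuous F := hF_lipW.continuous
  -- running minimum
  set M : ℝ → ℝ := fun t => sInf (F '' Set.Icc 0 (max 0 t)) with hM
  have hIcc_ne : ∀ t : ℝ, (Set.Icc (0:ℝ) (max 0 t)).Nonempty :=
    fun t => ⟨0, le_refl _, le_max_left _ _⟩
  have hbdd : ∀ t : ℝ, BddBelow (F '' Set.Icc 0 (max 0 t)) := fun t =>
    (isCompact_Icc.image hF_cont).bddBelow
  have hM_le : ∀ t, ∀ u ∈ Set.Icc 0 (max 0 t), M t ≤ F u := fun t u hu =>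
    csInf_le (hbdd t) ⟨u, hu, rfl⟩
  have hM_attain : ∀ t, ∃ u ∈ Set.Icc 0 (max 0 t), F u = M t := by
    intro t
    obtain ⟨u, hu, hmin⟩ := isCompact_Icc.exists_isMinOn (hIcc_ne t) hF_cont.continuousOn
    refine ⟨u, hu, le_antisymm ?_ (hM_le t u hu)⟩
    apply le_csInf ((hIcc_ne t).image F)
    rintro y ⟨v, hv, rfl⟩
    exact hmin hv
  have hM_anti : ∀ s t : ℝ, s ≤ t → M t ≤ M s := by
    intro s t hst
    exact csInf_le_csInf (hbdd t) ((hIcc_ne s).image F)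
      (Set.image_mono (Set.Icc_subset_Icc_right (max_le_max le_rfl hst)))
  have hM_lipd : ∀ s t : ℝ, s ≤ t → M s - M t ≤ L * (t - s) := by
    intro s t hst
    obtain ⟨u, hu, hFu⟩ := hM_attain t
    by_cases hcase : u ≤ max 0 s
    · have h1 : M s ≤ F u := hM_le s u ⟨hu.1, hcase⟩
      nlinarith [mul_nonneg hL.le (sub_nonneg.2 hst)]
    · push_neg at hcase
      have h1 : M s ≤ F (max 0 s) := hM_le s _ ⟨le_max_left _ _, le_refl _⟩
      have h2 : F (max 0 s) - F u ≤ L * (u - max 0 s) := by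
        have := hF_lip u (max 0 s)
        rw [abs_le] at this
        have habs : |max 0 s - u| = u - max 0 s := by
          rw [abs_sub_comm, abs_of_nonneg (sub_nonneg.2 hcase.le)]
        nlinarith [this.2]
      have h3 : u - max 0 s ≤ t - s := by
        have hu2 : u ≤ max 0 t := hu.2
        have : max 0 t ≤ max 0 s + (t - s) := by
          apply max_le
          · nlinarith [le_max_left (0:ℝ) s, sub_nonneg.2 hst]
          · nlinarith [le_max_right (0:ℝ) s]
        linarith
      nlinarith [mul_le_mul_of_nonneg_left h3 hL.le]
  have hM_lip : LipschitzWith K M := by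
    apply LipschitzWith.of_dist_le_mul
    intro a b
    rw [Real.dist_eq, Real.dist_eq, hKL]
    rcases le_total a b with h | h
    · have := hM_lipd a b h
      have h2 := hM_anti a b h
      rw [abs_of_nonneg (sub_nonneg.2 h2), abs_of_nonpos (sub_nonpos.2 h)]
      linarith
    · have := hM_lipd b a h
      have h2 := hM_anti b a h
      rw [abs_of_nonpos (sub_nonpos.2 h2), abs_of_nonneg (sub_nonneg.2 h)]
      linarith
  set m : ℝ → ℝ := fun t => min 0 (M t) with hm
  have hm_lip : LipschitzWith K m := hM_lip.const_min 0
  have hm_anti : ∀ s t : ℝ, s ≤ t → m t ≤ m s := fun s t hst =>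
    min_le_min le_rfl (hM_anti s t hst)
  have hm_nonpos : ∀ t, m t ≤ 0 := fun t => min_le_left _ _
  set w : ℝ → ℝ := fun t => F t - m t with hw
  have hw_lipW : LipschitzWith (K + K) w := hF_lipW.sub hm_lip
  have hw_cont : Continuous w := hw_lipW.continuous
  have hF0 : F 0 = w₀ := by rw [hF]; simp
  have hM0 : M 0 = w₀ := by
    rw [hM]
    norm_num
    exact hF0
  have hw0 : w 0 = w₀ := by
    rw [hw]
    simp only [hm, hM0, hF0, min_eq_left hw₀, sub_zero]
  have hw_nonneg : ∀ t : ℝ, 0 ≤ t → 0 ≤ w t := by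
    intro t ht
    have h1 : M t ≤ F t := hM_le t t ⟨ht, le_max_right _ _⟩
    have h2 : m t ≤ M t := min_le_right _ _
    rw [hw]; dsimp only; linarith
  -- Lipschitz on [0,T] with the sharp constant
  have key_upper : ∀ a b : ℝ, 0 ≤ a → a ≤ b → w b - w a ≤ L * (b - a) := by
    intro a b ha hab
    by_cases hcase : m b = m a
    · have h1 := hF_lip a b
      rw [abs_le, abs_of_nonneg (sub_nonneg.2 hab)] at h1
      rw [hw]; dsimp only; rw [hcase]; linarith [h1.2]
    · have hmb : m b < m a := lt_of_le_of_ne (hm_anti a b hab) hcase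
      have hMb : M b < 0 := by
        by_contra hcon
        push_neg at hcon
        have h0 : m b = 0 := min_eq_left hcon
        have := hm_nonpos a
        linarith
      have hmbM : m b = M b := min_eq_right hMb.le
      obtain ⟨u, hu, hFu⟩ := hM_attain b
      have hau : a < u := by
        by_contra hcon
        push_neg at hcon
        have h5 : M a ≤ M b := by
          rw [← hFu]
          exact hM_le a u ⟨hu.1, le_trans hcon (le_max_right 0 a)⟩
        have h6 : m a ≤ m b := min_le_min le_rfl h5
        linarith
      have hub' : u ≤ b := le_trans hu.2 (le_of_eq (max_eq_right (le_trans ha hab)))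
      have h6 : F b - F u ≤ L * (b - u) := by
        have h7 := hF_lip u b
        rw [abs_le, abs_of_nonneg (sub_nonneg.2 hub')] at h7
        linarith [h7.2]
      have h8 : w b = F b - F u := by rw [hw]; dsimp only; rw [hmbM, ← hFu]
      have h9 : 0 ≤ w a := hw_nonneg a ha
      have h10 : L * (b - u) ≤ L * (b - a) :=
        mul_le_mul_of_nonneg_left (by linarith) hL.le
      linarith
  have key_lower : ∀ a b : ℝ, a ≤ b → -(L * (b - a)) ≤ w b - w a := by
    intro a b hab
    have h1 := hF_lip a b
    rw [abs_le, abs_of_nonneg (sub_nonneg.2 hab)] at h1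
    have h3 : m b ≤ m a := hm_anti a b hab
    rw [hw]; dsimp only; linarith [h1.1]
  have hw_lipOn : LipschitzOnWith K w (Set.Icc 0 T) := by
    rw [lipschitzOnWith_iff_dist_le_mul]
    intro x hx y hy
    rw [Real.dist_eq, Real.dist_eq, hKL]
    rcases le_total x y with h | h
    · have hup := key_upper x y hx.1 h
      have hlo := key_lower x y h
      rw [abs_sub_comm x y, abs_of_nonneg (sub_nonneg.2 h), abs_le]
      exact ⟨by linarith, by linarith⟩
    · have hup := key_upper y x hy.1 h
      have hlo := key_lower y x h
      rw [abs_of_nonneg (sub_nonneg.2 h), abs_le]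
      exact ⟨by linarith, by linarith⟩
  -- the selection z
  set z : ℝ → ℝ := fun t => if w t = 0 then min 1 (rc t) else 1 with hz
  have hz_meas : Measurable z := by
    refine Measurable.ite ?_ (continuous_const.min hrc_cont).measurable measurable_const
    exact (isClosed_eq hw_cont continuous_const).measurableSet
  refine ⟨w, z, hw_lipOn, hz_meas, hw0, fun t ht => hw_nonneg t ht.1, ?_⟩
  have hdiff_ae : ∀ᵐ t ∂(volume.restrict (Set.Ioo (0:ℝ) T)), DifferentiableAt ℝ w t :=
    ae_restrict_of_ae hw_lipW.ae_differentiableAt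
  filter_upwards [hdiff_ae, ae_restrict_mem measurableSet_Ioo] with t hdiff ht
  have htT : t ∈ Set.Icc 0 T := ⟨ht.1.le, ht.2.le⟩
  have hrct : rc t = r t := by rw [hrc]; dsimp only; rw [hc_eq t htT]
  by_cases hwt : w t = 0
  · -- the solution sticks at zero
    have hzt : z t = min 1 (rc t) := by rw [hz]; dsimp only; rw [if_pos hwt]
    have hFt : F t = m t := by
      rw [hw] at hwt; dsimp only at hwt; linarith
    have hmin : ∀ u ∈ Set.Icc 0 t, F t ≤ F u := by
      intro u hu
      calc F t = m t := hFt
        _ ≤ M t := min_le_right _ _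
        _ ≤ F u := hM_le t u ⟨hu.1, le_trans hu.2 (le_max_right 0 t)⟩
    have hgle : g t ≤ 0 := deriv_nonpos_of_left_min' ht.1 (hF_deriv t) hmin
    have hrle : rc t ≤ 1 := by
      rw [hg] at hgle; dsimp only at hgle; nlinarith
    have hz_eq : z t = r t := by rw [hzt, min_eq_right hrle, hrct]
    have hder0 : HasDerivAt w 0 t := by
      have hlocmin : IsLocalMin w t := by
        have hv : ∀ᶠ s in nhds t, w t ≤ w s := by
          filter_upwards [Ioi_mem_nhds ht.1] with s hs
          rw [hwt]; exact hw_nonneg s hs.le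
        exact hv
      have hD := hdiff.hasDerivAt
      rwa [hlocmin.deriv_eq_zero] at hD
    constructor
    · simp only [psiGraph, Set.mem_setOf_eq, hz_eq]
      refine ⟨(hrb t htT).1, hrct ▸ hrle, ?_, ?_⟩
      · intro h; rw [hwt] at h; exact absurd h (lt_irrefl 0)
      · intro h; rw [hwt] at h; exact absurd h (lt_irrefl 0)
    · have heq : kd * (r t - z t) = 0 := by rw [hz_eq]; ring
      rw [heq]; exact hder0
  · -- the solution is strictly positive near t
    have hwpos : 0 < w t := lt_of_le_of_ne (hw_nonneg t ht.1.le) (Ne.symm hwt)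
    have hzt : z t = 1 := by rw [hz]; dsimp only; rw [if_neg hwt]
    have hnb : {s : ℝ | 0 < w s} ∩ Set.Ioo 0 T ∈ nhds t := by
      apply Filter.inter_mem
      · exact hw_cont.continuousAt.preimage_mem_nhds (Ioi_mem_nhds hwpos)
      · exact Ioo_mem_nhds ht.1 ht.2
    obtain ⟨ε, hε, hball⟩ := Metric.mem_nhds_iff.1 hnb
    have hballpos : ∀ s ∈ Metric.ball t ε, 0 < w s := fun s hs => (hball hs).1
    have key : ∀ s ∈ Metric.ball t ε, m s = m t := by
      intro s hs
      have hd : |s - t| < ε := by rwa [Metric.mem_ball, Real.dist_eq] at hs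
      rcases le_total s t with h | h
      · by_contra hne
        have h2 : m t < m s := lt_of_le_of_ne (hm_anti s t h) (fun hh => hne hh.symm)
        have h3 : M t < 0 := by
          by_contra hcon; push_neg at hcon
          have h0 : m t = 0 := min_eq_left hcon
          linarith [hm_nonpos s]
        have h4 : m t = M t := min_eq_right h3.le
        obtain ⟨u, hu, hFu⟩ := hM_attain t
        have hut : u ≤ t := le_trans hu.2 (le_of_eq (max_eq_right ht.1.le))
        have hsu : s < u := by
          by_contra hcon; push_neg at hcon
          have h5 : M s ≤ F u := hM_le s u ⟨hu.1, le_trans hcon (le_max_right 0 s)⟩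
          have h6 : m s ≤ m t := by
            rw [h4, ← hFu]
            exact le_trans (min_le_right _ _) h5
          linarith
        have hwu : w u = 0 := by
          have h6 : m t ≤ m u := hm_anti u t hut
          have h7 : w u ≤ 0 := by
            rw [hw]; dsimp only; rw [hFu, ← h4]; linarith
          exact le_antisymm h7 (hw_nonneg u hu.1)
        have hub : u ∈ Metric.ball t ε := by
          rw [Metric.mem_ball, Real.dist_eq,
            abs_of_nonpos (by linarith : u - t ≤ 0)]
          have h8 : |s - t| = t - s := by
            rw [abs_of_nonpos (by linarith : s - t ≤ 0), neg_sub]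
          rw [h8] at hd
          linarith
        exact absurd hwu (ne_of_gt (hballpos u hub))
      · by_contra hne
        have h2 : m s < m t := lt_of_le_of_ne (hm_anti t s h) hne
        have h3 : M s < 0 := by
          by_contra hcon; push_neg at hcon
          have h0 : m s = 0 := min_eq_left hcon
          linarith [hm_nonpos t]
        have h4 : m s = M s := min_eq_right h3.le
        obtain ⟨u, hu, hFu⟩ := hM_attain s
        have hus : u ≤ s := le_trans hu.2 (le_of_eq (max_eq_right (le_trans ht.1.le h)))
        have htu : t < u := by
          by_contra hcon; push_neg at hcon
          have h5 : M t ≤ F u := hM_le t u ⟨hu.1, le_trans hcon (le_max_right 0 t)⟩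
          have h6 : m t ≤ m s := by
            rw [h4, ← hFu]
            exact le_trans (min_le_right _ _) h5
          linarith
        have hwu : w u = 0 := by
          have h6 : m s ≤ m u := hm_anti u s hus
          have h7 : w u ≤ 0 := by
            rw [hw]; dsimp only; rw [hFu, ← h4]; linarith
          exact le_antisymm h7 (hw_nonneg u (le_trans ht.1.le htu.le))
        have hub : u ∈ Metric.ball t ε := by
          rw [Metric.mem_ball, Real.dist_eq,
            abs_of_nonneg (by linarith : (0:ℝ) ≤ u - t)]
          have h8 : |s - t| = s - t := abs_of_nonneg (by linarith)
          rw [h8] at hd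
          linarith
        exact absurd hwu (ne_of_gt (hballpos u hub))
    have hev : w =ᶠ[nhds t] fun s => F s - m t := by
      filter_upwards [Metric.ball_mem_nhds t hε] with s hs
      rw [hw]; dsimp only; rw [key s hs]
    have hder : HasDerivAt w (g t) t :=
      HasDerivAt.congr_of_eventuallyEq ((hF_deriv t).sub_const (m t)) hev
    constructor
    · simp only [psiGraph, Set.mem_setOf_eq, hzt]
      exact ⟨zero_le_one, le_refl 1, fun h => absurd h (by linarith), fun _ => trivial⟩
    · have heq : kd * (r t - z t) = g t := by
        rw [hzt, hg]; dsimp only; rw [hrct]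
      rw [heq]; exact hder
end

section
/- Convergence of the regularization as δ → 0: let T > 0, k > 0, k_d > 0, let w₀ ≥ 0, and let r : [0,T] → ℝ be continuous with 0 ≤ r(t) ≤ k/4 for all t. For each δ > 0 let w_δ : [0,T] → ℝ be the unique continuously differentiable solution of w_δ(0) = w₀, w_δ'(t) = k_d·(r(t) − ψ_δ(w_δ(t))). Then there exist a Lipschitz function w : [0,T] → ℝ and a measurable function z : [0,T] → ℝ with w(0) = w₀, z(t) ∈ ψ(w(t)) and w'(t) = k_d·(r(t) − z(t)) for almost every t ∈ (0,T), such that w_δ converges to w uniformly on [0,T] as δ → 0⁺ (i.e. sup_{t∈[0,T]} |w_δ(t) − w(t)| → 0). -/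
open MeasureTheory

open Set Filter Topology

lemma psiDelta_nonneg {δ : ℝ} (hδ : 0 < δ) (w : ℝ) : 0 ≤ psiDelta δ w := by
  unfold psiDelta
  split_ifs with h1 h2
  · exact le_rfl
  · exact div_nonneg (le_of_lt (not_le.1 h1)) hδ.le
  · exact zero_le_one

lemma psiDelta_le_one {δ : ℝ} (hδ : 0 < δ) (w : ℝ) : psiDelta δ w ≤ 1 := by
  unfold psiDelta
  split_ifs with h1 h2
  · exact zero_le_one
  · exact le_of_lt ((div_lt_one hδ).2 h2)
  · exact le_rfl

lemma psiDelta_of_nonpos {δ w : ℝ} (hw : w ≤ 0) : psiDelta δ w = 0 := if_pos hw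

lemma psiDelta_of_ge {δ w : ℝ} (hδ : 0 < δ) (hw : δ ≤ w) : psiDelta δ w = 1 := by
  unfold psiDelta
  rw [if_neg (by linarith), if_neg (by linarith)]

/-- Barrier lemma: if `f a ≤ c` and the derivative of `f` is nonpositive wherever `f > c`,
then `f ≤ c` on `[a,b]`. -/
lemma barrier {a b c : ℝ} {f g : ℝ → ℝ} (hab : a ≤ b)
    (hf : ContinuousOn f (Set.Icc a b))
    (hd : ∀ t ∈ Set.Ioo a b, HasDerivAt f (g t) t)
    (hg : ∀ t ∈ Set.Ioo a b, c < f t → g t ≤ 0)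
    (ha : f a ≤ c) : ∀ t ∈ Set.Icc a b, f t ≤ c := by
  have key : ∀ t ∈ Set.Ioo a b, f t ≤ c := by
    by_contra hcon
    push_neg at hcon
    obtain ⟨t₁, ht₁, hft₁⟩ := hcon
    set S := {s : ℝ | s ∈ Icc a t₁ ∧ f s ≤ c} with hSdef
    have hSc : IsClosed S := by
      have hSeq : S = Icc a t₁ ∩ f ⁻¹' (Iic c) := rfl
      rw [hSeq]
      exact (hf.mono (Icc_subset_Icc_right ht₁.2.le)).preimage_isClosed_of_isClosed
        isClosed_Icc isClosed_Iic
    have hSne : (S : Set ℝ).Nonempty := ⟨a, ⟨left_mem_Icc.2 ht₁.1.le, ha⟩⟩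
    have hSbdd : BddAbove S := ⟨t₁, fun s hs => hs.1.2⟩
    set t₀ := sSup S with ht₀def
    have ht₀S : t₀ ∈ S := hSc.csSup_mem hSne hSbdd
    have ht₀le : t₀ ≤ t₁ := ht₀S.1.2
    have ha0 : a ≤ t₀ := ht₀S.1.1
    have hft₀ : f t₀ ≤ c := ht₀S.2
    have ht₀lt : t₀ < t₁ := lt_of_le_of_ne ht₀le (by intro h; rw [h] at hft₀; linarith)
    have hgt : ∀ s ∈ Ioc t₀ t₁, c < f s := by
      intro s hs
      by_contra hsc
      push_neg at hsc
      have : s ∈ S := ⟨⟨ha0.trans hs.1.le, hs.2⟩, hsc⟩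
      exact absurd (le_csSup hSbdd this) (not_le.2 hs.1)
    have hanti : AntitoneOn f (Icc t₀ t₁) := by
      apply antitoneOn_of_deriv_nonpos (convex_Icc _ _)
        (hf.mono (Icc_subset_Icc ha0 ht₁.2.le))
      · rw [interior_Icc]
        intro x hx
        have hx' : x ∈ Ioo a b := ⟨ha0.trans_lt hx.1, hx.2.trans ht₁.2⟩
        exact ((hd x hx').differentiableAt).differentiableWithinAt
      · rw [interior_Icc]
        intro x hx
        have hx' : x ∈ Ioo a b := ⟨ha0.trans_lt hx.1, hx.2.trans ht₁.2⟩
        rw [(hd x hx').deriv]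
        exact hg x hx' (hgt x ⟨hx.1, hx.2.le⟩)
    have := hanti (left_mem_Icc.2 ht₀lt.le) (right_mem_Icc.2 ht₀lt.le) ht₀lt.le
    exact absurd hft₁ (not_lt.2 (this.trans hft₀))
  intro t ht
  rcases eq_or_lt_of_le ht.1 with h | h
  · rwa [← h]
  rcases eq_or_lt_of_le ht.2 with h' | h'
  · -- t = b
    subst h'
    have hab' : a < t := h
    have hne : t ∈ closure (Ioo a t) := by
      rw [closure_Ioo hab'.ne]
      exact right_mem_Icc.2 hab'.le
    haveI : (𝓝[Ioo a t] t).NeBot := mem_closure_iff_nhdsWithin_neBot.1 hne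
    have htend : Tendsto f (𝓝[Ioo a t] t) (𝓝 (f t)) :=
      (hf t ht).mono_left (nhdsWithin_mono _ Ioo_subset_Icc_self)
    exact le_of_tendsto htend (eventually_mem_nhdsWithin.mono fun s hs => key s hs)
  · exact key t ⟨h, h'⟩

/-- Growth lemma: if the derivative of `f` is at least `c` on `(a,b)`, then
`f a + c (t-a) ≤ f t` on `[a,b]`. -/
lemma grow {a b c : ℝ} {f g : ℝ → ℝ} (hf : ContinuousOn f (Set.Icc a b))
    (hd : ∀ t ∈ Set.Ioo a b, HasDerivAt f (g t) t)
    (hg : ∀ t ∈ Set.Ioo a b, c ≤ g t) :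
    ∀ t ∈ Set.Icc a b, f a + c * (t - a) ≤ f t := by
  intro t ht
  have hab : a ≤ b := ht.1.trans ht.2
  have hc : Continuous fun s : ℝ => c * s := by fun_prop
  have mono : MonotoneOn (fun s => f s - c * s) (Icc a b) := by
    apply monotoneOn_of_deriv_nonneg (convex_Icc a b)
      (hf.sub (hc.continuousOn))
    · rw [interior_Icc]
      intro x hx
      exact ((hd x hx).sub ((hasDerivAt_id x).const_mul c)).differentiableAt.differentiableWithinAt
    · rw [interior_Icc]
      intro x hx
      have h' : HasDerivAt (fun s => f s - c * s) (g x - c * 1) x :=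
        (hd x hx).sub ((hasDerivAt_id x).const_mul c)
      rw [show (f - fun s => c * s) = (fun s => f s - c * s) from rfl, h'.deriv]
      have := hg x hx
      linarith
  have := mono (left_mem_Icc.2 hab) ht ht.1
  simp only at this
  linarith

/-- The set of right-isolated points of a set of reals is countable. -/
lemma countable_right_isolated (S : Set ℝ) :
    {t | t ∈ S ∧ ∃ ε > 0, S ∩ Set.Ioo t (t + ε) = ∅}.Countable := by
  have hsub : {t | t ∈ S ∧ ∃ ε > 0, S ∩ Set.Ioo t (t + ε) = ∅} ⊆
      ⋃ q : ℚ, {t : ℝ | t ∈ S ∧ t < (q : ℝ) ∧ S ∩ Set.Ioo t (q : ℝ) = ∅} := by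
    rintro t ⟨htS, ε, hε, hempty⟩
    obtain ⟨q, hq1, hq2⟩ := exists_rat_btwn (show t < t + ε by linarith)
    refine Set.mem_iUnion.2 ⟨q, htS, hq1, ?_⟩
    apply Set.eq_empty_of_subset_empty
    rw [← hempty]
    exact Set.inter_subset_inter_right S (Set.Ioo_subset_Ioo_right hq2.le)
  refine Set.Countable.mono hsub (Set.countable_iUnion fun q => Set.Subsingleton.countable ?_)
  rintro t₁ ⟨h1S, h1q, h1e⟩ t₂ ⟨h2S, h2q, h2e⟩
  by_contra hne
  rcases lt_or_gt_of_ne hne with h | h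
  · have : t₂ ∈ S ∩ Set.Ioo t₁ (q : ℝ) := ⟨h2S, h, h2q⟩
    rw [h1e] at this
    exact this
  · have : t₁ ∈ S ∩ Set.Ioo t₂ (q : ℝ) := ⟨h1S, h, h1q⟩
    rw [h2e] at this
    exact this

/-- Convergence of the regularization as `δ → 0⁺`: if for each `δ > 0`, `W δ` is the
(unique) continuously differentiable solution on `[0,T]` of
`W_δ(0) = w₀`, `W_δ'(t) = k_d·(r(t) − ψ_δ(W_δ(t)))`, then there exist a Lipschitz `w` and a
measurable `z` with `w(0) = w₀`, `z(t) ∈ ψ(w(t))` and `w'(t) = k_d·(r(t) − z(t))` for a.e.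
`t ∈ (0,T)`, such that `W δ → w` uniformly on `[0,T]` as `δ → 0⁺`. -/
theorem regularization_convergence (T k kd w₀ : ℝ) (hT : 0 < T) (hk : 0 < k) (hkd : 0 < kd)
    (hw₀ : 0 ≤ w₀) (r : ℝ → ℝ) (hr : ContinuousOn r (Set.Icc 0 T))
    (hrb : ∀ t ∈ Set.Icc (0 : ℝ) T, 0 ≤ r t ∧ r t ≤ k / 4)
    (W : ℝ → ℝ → ℝ)
    (hWcont : ∀ δ > (0 : ℝ), ContinuousOn (W δ) (Set.Icc 0 T))
    (hW0 : ∀ δ > (0 : ℝ), W δ 0 = w₀)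
    (hWderiv : ∀ δ > (0 : ℝ), ∀ t ∈ Set.Icc (0 : ℝ) T,
      HasDerivWithinAt (W δ) (kd * (r t - psiDelta δ (W δ t))) (Set.Icc 0 T) t) :
    ∃ w z : ℝ → ℝ,
      (∃ L : NNReal, LipschitzOnWith L w (Set.Icc 0 T)) ∧
      Measurable z ∧
      w 0 = w₀ ∧
      (∀ᵐ t ∂(volume.restrict (Set.Ioo (0 : ℝ) T)),
        z t ∈ psiGraph (w t) ∧ HasDerivAt w (kd * (r t - z t)) t) ∧
      TendstoUniformlyOn W w (nhdsWithin 0 (Set.Ioi 0)) (Set.Icc 0 T) := by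
  -- 1. Pointwise derivative at interior points
  have hDA : ∀ δ > (0:ℝ), ∀ t ∈ Ioo (0:ℝ) T,
      HasDerivAt (W δ) (kd * (r t - psiDelta δ (W δ t))) t := fun δ hδ t ht =>
    (hWderiv δ hδ t (Ioo_subset_Icc_self ht)).hasDerivAt (Icc_mem_nhds ht.1 ht.2)
  -- 2. Nonnegativity
  have hnonneg : ∀ δ > (0:ℝ), ∀ t ∈ Icc (0:ℝ) T, 0 ≤ W δ t := by
    intro δ hδ t ht
    have hb := barrier (a := 0) (b := T) (c := 0) (f := fun t => -W δ t)
      (g := fun t => -(kd * (r t - psiDelta δ (W δ t)))) hT.le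
      ((hWcont δ hδ).neg) (fun s hs => (hDA δ hδ s hs).neg) ?_ ?_
    · have h5 : -W δ t ≤ 0 := hb t ht; linarith
    · intro s hs hpos
      have hpos' : (0:ℝ) < -W δ s := hpos
      have hW : W δ s ≤ 0 := by linarith
      show -(kd * (r s - psiDelta δ (W δ s))) ≤ 0
      rw [psiDelta_of_nonpos hW]
      have hr0 := (hrb s (Ioo_subset_Icc_self hs)).1
      nlinarith
    · show -W δ 0 ≤ 0
      rw [hW0 δ hδ]; linarith
  -- 3. Cauchy-type estimate
  have hcau : ∀ δ > (0:ℝ), ∀ δ' > (0:ℝ), ∀ t ∈ Icc (0:ℝ) T,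
      W δ t - W δ' t ≤ max δ δ' := by
    intro δ hδ δ' hδ'
    apply barrier (a := 0) (b := T) hT.le ((hWcont δ hδ).sub (hWcont δ' hδ'))
      (fun s hs => (hDA δ hδ s hs).sub (hDA δ' hδ' s hs))
    · intro s hs hgt
      have hgt' : max δ δ' < W δ s - W δ' s := hgt
      have h1 : δ ≤ W δ s := by
        have h2 := hnonneg δ' hδ' s (Ioo_subset_Icc_self hs)
        have h3 := le_max_left δ δ'
        linarith
      rw [psiDelta_of_ge hδ h1]
      have h4 := psiDelta_le_one hδ' (W δ' s)
      nlinarith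
    · rw [Pi.sub_apply, hW0 δ hδ, hW0 δ' hδ']
      have : (0:ℝ) < max δ δ' := lt_of_lt_of_le hδ (le_max_left _ _)
      linarith
  have habs : ∀ δ > (0:ℝ), ∀ δ' > (0:ℝ), ∀ t ∈ Icc (0:ℝ) T,
      |W δ t - W δ' t| ≤ max δ δ' := by
    intro δ hδ δ' hδ' t ht
    rw [abs_le]
    constructor
    · have := hcau δ' hδ' δ hδ t ht
      rw [max_comm] at this
      linarith
    · exact hcau δ hδ δ' hδ' t ht
  -- 4. Lipschitz bound
  set L : ℝ := kd * max (k / 4) 1 with hLdef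
  have hL1 : kd ≤ L := by nlinarith [le_max_right (k/4) (1:ℝ)]
  have hL0 : 0 ≤ L := by positivity
  have hlip : ∀ δ > (0:ℝ), ∀ s ∈ Icc (0:ℝ) T, ∀ t ∈ Icc (0:ℝ) T,
      |W δ s - W δ t| ≤ L * |s - t| := by
    have aux : ∀ δ > (0:ℝ), ∀ s ∈ Icc (0:ℝ) T, ∀ t ∈ Icc (0:ℝ) T, s ≤ t →
        |W δ t - W δ s| ≤ L * (t - s) := by
      intro δ hδ s hs t ht hst
      have hsub : Icc s t ⊆ Icc (0:ℝ) T := Icc_subset_Icc hs.1 ht.2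
      have hsub' : Ioo s t ⊆ Ioo (0:ℝ) T := fun x hx => ⟨lt_of_le_of_lt hs.1 hx.1, lt_of_lt_of_le hx.2 ht.2⟩
      have hbd : ∀ x ∈ Ioo s t, -L ≤ kd * (r x - psiDelta δ (W δ x)) ∧
          kd * (r x - psiDelta δ (W δ x)) ≤ L := by
        intro x hx
        have hx' := hsub' hx
        have h1 := (hrb x (Ioo_subset_Icc_self hx')).1
        have h2 := (hrb x (Ioo_subset_Icc_self hx')).2
        have h3 := psiDelta_nonneg hδ (W δ x)
        have h4 := psiDelta_le_one hδ (W δ x)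
        have h5 := le_max_left (k/4) (1:ℝ)
        constructor
        · nlinarith
        · nlinarith
      have g1 := grow (a := s) (b := t) (c := -L) (f := W δ)
        ((hWcont δ hδ).mono hsub) (fun x hx => hDA δ hδ x (hsub' hx))
        (fun x hx => (hbd x hx).1) t (right_mem_Icc.2 hst)
      have g2 := grow (a := s) (b := t) (c := -L) (f := fun x => -W δ x)
        (((hWcont δ hδ).mono hsub).neg)
        (fun x hx => (hDA δ hδ x (hsub' hx)).neg)
        (fun x hx => by
          show -L ≤ -(kd * (r x - psiDelta δ (W δ x)))
          have := (hbd x hx).2; linarith) t (right_mem_Icc.2 hst)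
      have g2' : -W δ s + -L * (t - s) ≤ -W δ t := g2
      rw [abs_le]
      constructor <;> linarith
    intro δ hδ s hs t ht
    rcases le_total s t with h | h
    · rw [abs_sub_comm (W δ s), abs_sub_comm s t, abs_of_nonneg (by linarith : (0:ℝ) ≤ t - s)]
      exact aux δ hδ s hs t ht h
    · rw [abs_of_nonneg (by linarith : (0:ℝ) ≤ s - t)]
      exact aux δ hδ t ht s hs h
  -- 5. the sequence δ_n = 1/(n+1) and the limit function
  set dseq : ℕ → ℝ := fun n => 1 / (n + 1) with hdseqdef
  have hdpos : ∀ n, 0 < dseq n := fun n => by positivity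
  have hdmono : ∀ {N n : ℕ}, N ≤ n → dseq n ≤ dseq N := by
    intro N n h
    apply one_div_le_one_div_of_le (by positivity)
    have : (N:ℝ) ≤ n := Nat.cast_le.2 h
    linarith
  have hdto : Tendsto dseq atTop (𝓝 0) := tendsto_one_div_add_atTop_nhds_zero_nat
  set proj : ℝ → ℝ := fun t => min T (max 0 t) with hprojdef
  have hprojmem : ∀ t, proj t ∈ Icc (0:ℝ) T := fun t =>
    ⟨le_min hT.le (le_max_left 0 t), min_le_left _ _⟩
  have hprojeq : ∀ t ∈ Icc (0:ℝ) T, proj t = t := fun t ht => by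
    simp only [hprojdef, max_eq_right ht.1, min_eq_right ht.2]
  have hproj1 : ∀ s t : ℝ, |proj s - proj t| ≤ |s - t| := by
    intro s t
    calc |proj s - proj t| ≤ max |T - T| |max 0 s - max 0 t| :=
          abs_min_sub_min_le_max T (max 0 s) T (max 0 t)
      _ = |max 0 s - max 0 t| := by simp
      _ = |max s 0 - max t 0| := by rw [max_comm (0:ℝ) s, max_comm (0:ℝ) t]
      _ ≤ |s - t| := abs_max_sub_max_le_abs s t 0
  have hcauchy : ∀ t ∈ Icc (0:ℝ) T, CauchySeq (fun n => W (dseq n) t) := by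
    intro t ht
    apply cauchySeq_of_le_tendsto_0 dseq _ hdto
    intro n m N hn hm
    rw [Real.dist_eq]
    calc |W (dseq n) t - W (dseq m) t| ≤ max (dseq n) (dseq m) :=
          habs _ (hdpos n) _ (hdpos m) t ht
      _ ≤ dseq N := max_le (hdmono hn) (hdmono hm)
  set w : ℝ → ℝ := fun t => limUnder atTop (fun n => W (dseq n) (proj t)) with hwdef
  have hwlimP : ∀ t : ℝ, Tendsto (fun n => W (dseq n) (proj t)) atTop (𝓝 (w t)) := fun t =>
    (hcauchy (proj t) (hprojmem t)).tendsto_limUnder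
  have hwlim : ∀ t ∈ Icc (0:ℝ) T, Tendsto (fun n => W (dseq n) t) atTop (𝓝 (w t)) := by
    intro t ht
    have := hwlimP t
    rwa [hprojeq t ht] at this
  -- 6. uniform estimate
  have hest : ∀ δ > (0:ℝ), ∀ t ∈ Icc (0:ℝ) T, |W δ t - w t| ≤ δ := by
    intro δ hδ t ht
    have h1 : Tendsto (fun n => |W δ t - W (dseq n) t|) atTop (𝓝 |W δ t - w t|) :=
      (tendsto_const_nhds.sub (hwlim t ht)).abs
    apply le_of_tendsto h1
    filter_upwards [hdto.eventually (gt_mem_nhds hδ)] with n hn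
    calc |W δ t - W (dseq n) t| ≤ max δ (dseq n) := habs δ hδ _ (hdpos n) t ht
      _ = δ := max_eq_left hn.le
  have hw0 : w 0 = w₀ := by
    have h1 := hwlim 0 ⟨le_refl 0, hT.le⟩
    have h2 : Tendsto (fun n => W (dseq n) 0) atTop (𝓝 w₀) := by
      have : (fun n => W (dseq n) 0) = fun _ => w₀ := funext fun n => hW0 _ (hdpos n)
      rw [this]; exact tendsto_const_nhds
    exact tendsto_nhds_unique h1 h2
  have hwlip : LipschitzWith (Real.toNNReal L) w := by
    apply LipschitzWith.of_dist_le_mul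
    intro s t
    apply le_of_tendsto ((hwlimP s).dist (hwlimP t))
    apply Eventually.of_forall
    intro n
    rw [Real.dist_eq, Real.dist_eq, Real.coe_toNNReal L hL0]
    calc |W (dseq n) (proj s) - W (dseq n) (proj t)| ≤ L * |proj s - proj t| :=
          hlip _ (hdpos n) _ (hprojmem s) _ (hprojmem t)
      _ ≤ L * |s - t| := by
          have := hproj1 s t
          nlinarith [abs_nonneg (proj s - proj t)]
  have hwcont : Continuous w := hwlip.continuous
  have hwnonneg : ∀ t ∈ Icc (0:ℝ) T, 0 ≤ w t := fun t ht =>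
    ge_of_tendsto (hwlim t ht) (Eventually.of_forall fun n => hnonneg _ (hdpos n) t ht)
  -- 7. uniform convergence
  have hunif : TendstoUniformlyOn W w (nhdsWithin 0 (Set.Ioi 0)) (Set.Icc 0 T) := by
    rw [Metric.tendstoUniformlyOn_iff]
    intro ε hε
    filter_upwards [Ioo_mem_nhdsGT hε] with δ hδ t ht
    rw [Real.dist_eq, abs_sub_comm]
    calc |W δ t - w t| ≤ δ := hest δ hδ.1 t ht
      _ < ε := hδ.2
  -- 8. the measurable selection z
  have hprojcont : Continuous proj := continuous_const.min (continuous_const.max continuous_id)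
  have hrext : Continuous fun t => r (proj t) := hr.comp_continuous hprojcont hprojmem
  set z : ℝ → ℝ := fun t => if 0 < w t then 1 else min 1 (r (proj t)) with hzdef
  have hzmeas : Measurable z :=
    Measurable.ite (measurableSet_lt measurable_const hwcont.measurable)
      measurable_const (continuous_const.min hrext).measurable
  -- 9. null sets
  set S : Set ℝ := {t | w t = 0} with hSdef
  set R : Set ℝ := {t | t ∈ S ∧ ∃ ε > 0, S ∩ Set.Ioo t (t + ε) = ∅} with hRdef
  have hRnull : volume R = 0 := (countable_right_isolated S).measure_zero volume
  have h1 : ∀ᵐ t ∂(volume : Measure ℝ), DifferentiableAt ℝ w t :=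
    hwlip.ae_differentiableAt (μ := volume)
  have h2 : ∀ᵐ t ∂(volume : Measure ℝ), t ∉ R := measure_eq_zero_iff_ae_notMem.1 hRnull
  have hae : ∀ᵐ t ∂(volume.restrict (Set.Ioo (0:ℝ) T)),
      (DifferentiableAt ℝ w t ∧ t ∉ R) ∧ t ∈ Set.Ioo (0:ℝ) T :=
    (ae_restrict_of_ae (h1.and h2)).and (ae_restrict_mem measurableSet_Ioo)
  refine ⟨w, z, ⟨Real.toNNReal L, hwlip.lipschitzOnWith⟩, hzmeas, hw0, ?_, hunif⟩
  filter_upwards [hae] with t hhyp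
  obtain ⟨⟨hdiff, hnR⟩, ht⟩ := hhyp
  have htIcc : t ∈ Icc (0:ℝ) T := Ioo_subset_Icc_self ht
  by_cases hwt : 0 < w t
  · -- positive case
    have hm : 0 < w t := hwt
    set m := w t with hmdef
    set δ₀ : ℝ := m / 4 with hδ₀def
    have hδ₀ : 0 < δ₀ := by positivity
    have hev : ∀ᶠ s in 𝓝 t, m / 2 < w s :=
      hwcont.continuousAt.eventually (lt_mem_nhds (by linarith))
    obtain ⟨η₁, hη₁, hball⟩ := Metric.eventually_nhds_iff.1 hev
    set η : ℝ := min (η₁ / 2) (min (t / 2) ((T - t) / 2)) with hηdef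
    have hη : 0 < η :=
      lt_min (by linarith) (lt_min (by linarith [ht.1]) (by linarith [ht.2]))
    have hηa : η ≤ η₁ / 2 := min_le_left _ _
    have hηb : η ≤ t / 2 := (min_le_right _ _).trans (min_le_left _ _)
    have hηc : η ≤ (T - t) / 2 := (min_le_right _ _).trans (min_le_right _ _)
    have hIsub : Icc (t - η) (t + η) ⊆ Icc (0:ℝ) T :=
      Icc_subset_Icc (by linarith [ht.1]) (by linarith [ht.2])
    have hwI : ∀ s ∈ Icc (t - η) (t + η), m / 2 < w s := by
      intro s hs
      apply hball
      rw [Real.dist_eq]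
      have habs2 : |s - t| ≤ η := abs_le.2 ⟨by linarith [hs.1], by linarith [hs.2]⟩
      linarith [habs2]
    have hWge : ∀ δ, 0 < δ → δ ≤ δ₀ → ∀ s ∈ Icc (t - η) (t + η), δ ≤ W δ s := by
      intro δ hδ hδle s hs
      have h3 := abs_le.1 (hest δ hδ s (hIsub hs))
      have h4 := hwI s hs
      linarith [h3.1, h3.2]
    have hDA1 : ∀ δ, 0 < δ → δ ≤ δ₀ → ∀ x ∈ Ico (t - η) (t + η),
        HasDerivWithinAt (W δ) (kd * (r x - 1)) (Set.Ici x) x := by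
      intro δ hδ hδle x hx
      have hx' : x ∈ Ioo (0:ℝ) T := ⟨by linarith [hx.1, ht.1], by linarith [hx.2, ht.2]⟩
      have h5 := hDA δ hδ x hx'
      rw [psiDelta_of_ge hδ (hWge δ hδ hδle x ⟨hx.1, hx.2.le⟩)] at h5
      exact h5.hasDerivWithinAt
    have heqδ : ∀ δ, 0 < δ → δ ≤ δ₀ → ∀ s ∈ Icc (t - η) (t + η),
        W δ s = W δ₀ s + (W δ (t - η) - W δ₀ (t - η)) := by
      intro δ hδ hδle
      exact eq_of_has_deriv_right_eq (f' := fun x => kd * (r x - 1))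
        (hDA1 δ hδ hδle)
        (fun x hx => (hDA1 δ₀ hδ₀ le_rfl x hx).add_const _)
        ((hWcont δ hδ).mono hIsub)
        (((hWcont δ₀ hδ₀).mono hIsub).add continuousOn_const)
        (by ring)
    have hweq : ∀ s ∈ Icc (t - η) (t + η),
        w s = W δ₀ s + (w (t - η) - W δ₀ (t - η)) := by
      intro s hs
      set X : ℝ := w s - (W δ₀ s + (w (t - η) - W δ₀ (t - η))) with hXdef
      have hkey : ∀ δ, 0 < δ → δ ≤ δ₀ → |X| ≤ 2 * δ := by
        intro δ hδ hδle
        have e1 := abs_le.1 (hest δ hδ s (hIsub hs))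
        have e2 := abs_le.1 (hest δ hδ (t - η) (hIsub (left_mem_Icc.2 (by linarith))))
        have e3 := heqδ δ hδ hδle s hs
        rw [hXdef, abs_le]
        constructor <;> linarith [e1.1, e1.2, e2.1, e2.2]
      have hle : |X| ≤ 0 := by
        by_contra hpos
        push_neg at hpos
        have h5 := hkey (min δ₀ (|X| / 4)) (lt_min hδ₀ (by linarith)) (min_le_left _ _)
        have h6 : min δ₀ (|X| / 4) ≤ |X| / 4 := min_le_right _ _
        linarith
      have hX0 : X = 0 := abs_eq_zero.1 (le_antisymm hle (abs_nonneg _))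
      rw [hXdef] at hX0
      linarith
    have hWd0 : HasDerivAt (W δ₀) (kd * (r t - 1)) t := by
      have h5 := hDA δ₀ hδ₀ t ht
      rwa [psiDelta_of_ge hδ₀
        (hWge δ₀ hδ₀ le_rfl t ⟨by linarith, by linarith⟩)] at h5
    have hgd : HasDerivAt (fun s => W δ₀ s + (w (t - η) - W δ₀ (t - η)))
        (kd * (r t - 1)) t := hWd0.add_const _
    have hIN : Icc (t - η) (t + η) ∈ 𝓝 t := Icc_mem_nhds (by linarith) (by linarith)
    have heq : w =ᶠ[𝓝 t] fun s => W δ₀ s + (w (t - η) - W δ₀ (t - η)) :=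
      eventually_of_mem hIN hweq
    have hwd : HasDerivAt w (kd * (r t - 1)) t := hgd.congr_of_eventuallyEq heq
    have hzt : z t = 1 := if_pos hwt
    constructor
    · show z t ∈ psiGraph (w t)
      rw [hzt]
      exact ⟨zero_le_one, le_rfl, fun h => absurd h (by linarith), fun _ => rfl⟩
    · rw [show kd * (r t - z t) = kd * (r t - 1) by rw [hzt]]
      exact hwd
  · -- zero case
    have hwt0 : w t = 0 := le_antisymm (not_lt.1 hwt) (hwnonneg t htIcc)
    have htS : t ∈ S := hwt0
    have hacc : ∀ ε > (0:ℝ), (S ∩ Set.Ioo t (t + ε)).Nonempty := by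
      intro ε hε
      rw [Set.nonempty_iff_ne_empty]
      intro hemp
      exact hnR ⟨htS, ε, hε, hemp⟩
    have hrle : r t ≤ 1 := by
      by_contra hr1
      push_neg at hr1
      set a : ℝ := (r t - 1) / 2 with hadef
      have ha : 0 < a := by simp only [hadef]; linarith
      have hrcont : ContinuousAt r t :=
        (hr t htIcc).continuousAt (Icc_mem_nhds ht.1 ht.2)
      have hev : ∀ᶠ s in 𝓝 t, 1 + a < r s :=
        hrcont.eventually (lt_mem_nhds (by simp only [hadef]; linarith))
      obtain ⟨η₀, hη₀, hball⟩ := Metric.eventually_nhds_iff.1 hev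
      set η : ℝ := min (η₀ / 2) (T - t) with hηdef
      have hη : 0 < η := lt_min (by linarith) (by linarith [ht.2])
      have hη1 : η ≤ η₀ / 2 := min_le_left _ _
      have hη2 : η ≤ T - t := min_le_right _ _
      obtain ⟨s, hsS, hsI⟩ := hacc η hη
      have hkey : ∀ δ > (0:ℝ), kd * a * (s - t) ≤ δ := by
        intro δ hδ
        have hIsub2 : Icc t (t + η) ⊆ Icc (0:ℝ) T :=
          Icc_subset_Icc ht.1.le (by linarith)
        have hIsub2' : ∀ x ∈ Ioo t (t + η), x ∈ Ioo (0:ℝ) T := fun x hx =>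
          ⟨ht.1.trans hx.1, lt_of_lt_of_le hx.2 (by linarith)⟩
        have hgba : ∀ x ∈ Ioo t (t + η), kd * a ≤ kd * (r x - psiDelta δ (W δ x)) := by
          intro x hx
          have h8 : 1 + a < r x := by
            apply hball
            rw [Real.dist_eq, abs_of_pos (by linarith [hx.1] : (0:ℝ) < x - t)]
            linarith [hx.2]
          have h9 := psiDelta_le_one hδ (W δ x)
          nlinarith
        have hsmem : s ∈ Icc t (t + η) := ⟨hsI.1.le, hsI.2.le⟩
        have hgrow := grow ((hWcont δ hδ).mono hIsub2)
          (fun x hx => hDA δ hδ x (hIsub2' x hx)) hgba s hsmem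
        have h5 := hnonneg δ hδ t htIcc
        have h6 := abs_le.1 (hest δ hδ s (hIsub2 hsmem))
        have h7 : w s = 0 := hsS
        linarith [h6.1, h6.2]
      have hst : 0 < s - t := by linarith [hsI.1]
      have hp : 0 < kd * a * (s - t) := mul_pos (mul_pos hkd ha) hst
      have := hkey (kd * a * (s - t) / 2) (by linarith)
      linarith
    have hderiv0 : HasDerivAt w 0 t := by
      have hd' : HasDerivAt w (deriv w t) t := hdiff.hasDerivAt
      have hslope : Tendsto (slope w t) (𝓝[≠] t) (𝓝 (deriv w t)) :=
        hasDerivAt_iff_tendsto_slope.1 hd'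
      have hclos : t ∈ closure (S ∩ Set.Ioi t) := by
        rw [Metric.mem_closure_iff]
        intro ε hε
        obtain ⟨s, hsS, hsI⟩ := hacc ε hε
        refine ⟨s, ⟨hsS, hsI.1⟩, ?_⟩
        rw [Real.dist_eq, abs_of_neg (by linarith [hsI.1] : t - s < 0)]
        linarith [hsI.2]
      haveI hNB : (𝓝[S ∩ Set.Ioi t] t).NeBot := mem_closure_iff_nhdsWithin_neBot.1 hclos
      have hmono : 𝓝[S ∩ Set.Ioi t] t ≤ 𝓝[≠] t :=
        nhdsWithin_mono t (fun x hx => Set.mem_compl_singleton_iff.2 (ne_of_gt hx.2))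
      have hA : Tendsto (slope w t) (𝓝[S ∩ Set.Ioi t] t) (𝓝 (deriv w t)) :=
        hslope.mono_left hmono
      have hB : Tendsto (slope w t) (𝓝[S ∩ Set.Ioi t] t) (𝓝 0) := by
        have heq0 : (fun _ : ℝ => (0:ℝ)) =ᶠ[𝓝[S ∩ Set.Ioi t] t] slope w t := by
          filter_upwards [self_mem_nhdsWithin] with x hx
          have hx0 : w x = 0 := hx.1
          simp [slope_def_field, hx0, hwt0]
        exact Tendsto.congr' heq0 tendsto_const_nhds
      have hzero : deriv w t = 0 := tendsto_nhds_unique hA hB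
      rwa [hzero] at hd'
    have hzt : z t = r t := by
      show (if 0 < w t then 1 else min 1 (r (proj t))) = r t
      rw [if_neg hwt, hprojeq t htIcc, min_eq_right hrle]
    constructor
    · show z t ∈ psiGraph (w t)
      rw [hzt]
      refine ⟨(hrb t htIcc).1, hrle, ?_, fun h => absurd h hwt⟩
      intro h
      rw [hwt0] at h
      exact absurd h (lt_irrefl 0)
    · rw [show kd * (r t - z t) = 0 by rw [hzt]; ring]
      exact hderiv0
end
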